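/- There is a constant c > 0 such that for infinitely many natural numbers n there exists an undirected 2-edge-connected graph G on n vertices with positive real edge weights and a source vertex s ∈ V(G) with the following property: every spanning subgraph H of G satisfying d_{H−e}(s,t) = d_{G−e}(s,t) for all edges e ∈ E(G) and all vertices t ∈ V(G) has at least c · n² edges. (Exact edge-fault-tolerant single-source distance preservation may require Θ(n²) edges.) -/

import Mathlib

open SimpleGraph

noncomputable def walkWeight {V : Type*} {G : SimpleGraph V} (w : V → V → ℝ)
    {x y : V} (p : G.Walk x y) : ℝ :=
  (p.darts.map (fun d => w d.toProd.1 d.toProd.2)).sum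

noncomputable def wdist {V : Type*} (G : SimpleGraph V) (w : V → V → ℝ) (x y : V) : ℝ :=
  sInf {r : ℝ | ∃ p : G.Walk x y, walkWeight w p = r}

lemma walkWeight_nil {V : Type*} {G : SimpleGraph V} (w : V → V → ℝ) {x : V} :
    walkWeight w (Walk.nil : G.Walk x x) = 0 := by simp [walkWeight]

lemma walkWeight_cons {V : Type*} {G : SimpleGraph V} (w : V → V → ℝ) {x y z : V}
    (h : G.Adj x y) (p : G.Walk y z) :
    walkWeight w (Walk.cons h p) = w x y + walkWeight w p := by
  simp [walkWeight]

lemma walkWeight_ge {V : Type*} {G : SimpleGraph V} (w : V → V → ℝ) (φ : V → ℝ)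
    (h : ∀ a b, G.Adj a b → φ b - φ a ≤ w a b) :
    ∀ {x y : V} (p : G.Walk x y), φ y - φ x ≤ walkWeight w p := by
  intro x y p
  induction p with
  | nil => simp [walkWeight]
  | @cons a b c hab q ih =>
      rw [walkWeight_cons]
      have := h _ _ hab
      linarith

lemma wdist_eq_of {V : Type*} {G : SimpleGraph V} (w : V → V → ℝ) {x y : V} {v : ℝ}
    (p : G.Walk x y) (hp : walkWeight w p = v)
    (lb : ∀ q : G.Walk x y, v ≤ walkWeight w q) : wdist G w x y = v := by
  have hlb : ∀ r ∈ {r : ℝ | ∃ q : G.Walk x y, walkWeight w q = r}, v ≤ r := by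
    rintro r ⟨q, rfl⟩; exact lb q
  exact le_antisymm (csInf_le ⟨v, hlb⟩ ⟨p, hp⟩)
    (le_csInf ⟨v, p, hp⟩ hlb)

lemma wdist_contra {V : Type*} {G : SimpleGraph V} (w : V → V → ℝ) {x y : V} {v : ℝ}
    (hv : 0 < v) (lb : ∀ q : G.Walk x y, v + 1 ≤ walkWeight w q)
    (heq : wdist G w x y = v) : False := by
  rcases isEmpty_or_nonempty (G.Walk x y) with he | hne
  · have : {r : ℝ | ∃ q : G.Walk x y, walkWeight w q = r} = ∅ := by
      ext r; simp only [Set.mem_setOf_eq, Set.mem_empty_iff_false, iff_false]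
      rintro ⟨q, -⟩; exact he.elim q
    rw [wdist, this, Real.sInf_empty] at heq
    linarith
  · obtain ⟨q0⟩ := hne
    have h1 : v + 1 ≤ wdist G w x y := by
      rw [wdist]
      refine le_csInf ?_ ?_
      · exact ⟨walkWeight w q0, q0, rfl⟩
      · rintro r ⟨q, rfl⟩; exact lb q
    rw [heq] at h1; linarith

/-- natural-number edge weights for the lower bound graph -/
def lbwn (m : ℕ) (x y : Fin (2*m)) : ℕ :=
  if x.val < m ∧ m ≤ y.val then 20*m - 2*x.val
  else if y.val < m ∧ m ≤ x.val then 20*m - 2*y.val else 1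

noncomputable def lbw (m : ℕ) (x y : Fin (2*m)) : ℝ := (lbwn m x y : ℝ)

def lbAdj (m : ℕ) (x y : Fin (2*m)) : Prop :=
  (x.val + 1 = y.val ∧ y.val < m) ∨ (y.val + 1 = x.val ∧ x.val < m) ∨
    (x.val < m ∧ m ≤ y.val) ∨ (y.val < m ∧ m ≤ x.val)

def lbG (m : ℕ) : SimpleGraph (Fin (2*m)) where
  Adj := lbAdj m
  symm := ⟨by intro x y h; unfold lbAdj at *; tauto⟩
  loopless := ⟨by intro x h; rcases h with ⟨h1, h2⟩ | ⟨h1, h2⟩ | ⟨h1, h2⟩ | ⟨h1, h2⟩ <;> omega⟩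

lemma lbG_adj (m : ℕ) (x y : Fin (2*m)) : (lbG m).Adj x y ↔ lbAdj m x y := Iff.rfl

lemma lbwn_symm (m : ℕ) (x y : Fin (2*m)) : lbwn m x y = lbwn m y x := by
  unfold lbwn; split_ifs <;> omega

lemma lbwn_pos (m : ℕ) (hm : 2 ≤ m) (x y : Fin (2*m)) : 0 < lbwn m x y := by
  unfold lbwn
  have hx := x.isLt
  have hy := y.isLt
  split_ifs <;> omega

/-- the potential function certifying distances after deleting path edge (i, i+1). -/
def lbφ (m i : ℕ) (x : Fin (2*m)) : ℕ :=
  if x.val < m then (if x.val ≤ i then x.val else 4*m - x.val) else 20*m - i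

lemma lbφ_constraint (m : ℕ) (hm : 2 ≤ m) (i : ℕ) (hi : i + 1 < m)
    (a b : Fin (2*m)) (hab : lbAdj m a b)
    (hne : ¬ (a.val = i ∧ b.val = i + 1) ∧ ¬ (b.val = i ∧ a.val = i + 1)) :
    lbφ m i b ≤ lbwn m a b + lbφ m i a := by
  unfold lbφ lbwn lbAdj at *
  rcases hab with ⟨h1, h2⟩ | ⟨h1, h2⟩ | ⟨h1, h2⟩ | ⟨h1, h2⟩ <;> split_ifs <;> omega

lemma lbφ_strict (m : ℕ) (hm : 2 ≤ m) (i j : ℕ) (hi : i + 1 < m) (hj1 : m ≤ j)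
    (a b : Fin (2*m)) (hab : lbAdj m a b) (hb : b.val = j) (hnf : a.val ≠ i) :
    lbφ m i b + 1 ≤ lbwn m a b + lbφ m i a := by
  unfold lbφ lbwn lbAdj at *
  rcases hab with ⟨h1, h2⟩ | ⟨h1, h2⟩ | ⟨h1, h2⟩ | ⟨h1, h2⟩ <;> split_ifs <;> omega

def lbψ (m i j : ℕ) (x : Fin (2*m)) : ℕ :=
  lbφ m i x + if x.val = j then 1 else 0

lemma lbψ_constraint (m : ℕ) (hm : 2 ≤ m) (i j : ℕ) (hi : i + 1 < m)
    (hj1 : m ≤ j) (hj2 : j < 2*m)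
    (a b : Fin (2*m)) (hab : lbAdj m a b)
    (hne : ¬ (a.val = i ∧ b.val = i + 1) ∧ ¬ (b.val = i ∧ a.val = i + 1))
    (hnf : ¬ (a.val = i ∧ b.val = j) ∧ ¬ (b.val = i ∧ a.val = j)) :
    lbψ m i j b ≤ lbwn m a b + lbψ m i j a := by
  unfold lbψ lbφ lbwn lbAdj at *
  rcases hab with ⟨h1, h2⟩ | ⟨h1, h2⟩ | ⟨h1, h2⟩ | ⟨h1, h2⟩ <;> split_ifs <;> omega

lemma lbφ_bj (m i j : ℕ) (hj1 : m ≤ j) (hj2 : j < 2*m) :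
    lbφ m i ⟨j, hj2⟩ = 20*m - i := by
  unfold lbφ
  have h : (⟨j, hj2⟩ : Fin (2*m)).val = j := rfl
  rw [h]
  split_ifs <;> omega

lemma lbφ_s0 (m i : ℕ) (hm : 2 ≤ m) (h0 : 0 < 2*m) :
    lbφ m i ⟨0, h0⟩ = 0 := by
  unfold lbφ
  have h : (⟨0, h0⟩ : Fin (2*m)).val = 0 := rfl
  rw [h]
  split_ifs <;> omega

lemma lbψ_bj (m i j : ℕ) (hi : i < m) (hj1 : m ≤ j) (hj2 : j < 2*m) :
    lbψ m i j ⟨j, hj2⟩ = (20*m - i) + 1 := by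
  unfold lbψ
  have h : (⟨j, hj2⟩ : Fin (2*m)).val = j := rfl
  rw [h, if_pos rfl, lbφ_bj m i j hj1 hj2]

lemma lbψ_s0 (m i j : ℕ) (hm : 2 ≤ m) (hj1 : m ≤ j) (h0 : 0 < 2*m) :
    lbψ m i j ⟨0, h0⟩ = 0 := by
  unfold lbψ
  have h : (⟨0, h0⟩ : Fin (2*m)).val = 0 := rfl
  rw [h, if_neg (by omega), lbφ_s0 m i hm h0]

lemma forced (m : ℕ) (hm : 2 ≤ m) (h0 : 0 < 2*m)
    (H : SimpleGraph (Fin (2*m))) (hHG : H ≤ lbG m)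
    (pres : ∀ e ∈ (lbG m).edgeSet, ∀ t : Fin (2*m),
      wdist (H.deleteEdges {e}) (lbw m) ⟨0, h0⟩ t
        = wdist ((lbG m).deleteEdges {e}) (lbw m) ⟨0, h0⟩ t)
    (i j : ℕ) (hi : i + 1 < m) (hiu : i < 2*m) (hiu1 : i + 1 < 2*m)
    (hj1 : m ≤ j) (hj2 : j < 2*m) :
    H.Adj ⟨i, hiu⟩ ⟨j, hj2⟩ := by
  have he : (s(⟨i, hiu⟩, ⟨i+1, hiu1⟩) : Sym2 (Fin (2*m))) ∈ (lbG m).edgeSet := by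
    rw [mem_edgeSet]
    exact Or.inl ⟨rfl, hi⟩
  -- the upper-bound walk in G - e
  have walkup : ∀ d k (hk : k < 2*m), k + d = i →
      ∃ p : ((lbG m).deleteEdges {s(⟨i, hiu⟩, ⟨i+1, hiu1⟩)}).Walk ⟨k, hk⟩ ⟨j, hj2⟩,
        walkWeight (lbw m) p = ((d + (20*m - 2*i) : ℕ) : ℝ) := by
    intro d
    induction d with
    | zero =>
        intro k hk hki
        have hki' : k = i := by omega
        have hadj : ((lbG m).deleteEdges {s(⟨i, hiu⟩, ⟨i+1, hiu1⟩)}).Adj ⟨k, hk⟩ ⟨j, hj2⟩ := by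
          rw [deleteEdges_adj]
          refine ⟨Or.inr (Or.inr (Or.inl ⟨show k < m by omega, show m ≤ j from hj1⟩)), ?_⟩
          simp only [Set.mem_singleton_iff, Sym2.eq_iff, Fin.mk.injEq]
          omega
        refine ⟨Walk.cons hadj Walk.nil, ?_⟩
        rw [walkWeight_cons, walkWeight_nil]
        have hw : lbwn m ⟨k, hk⟩ ⟨j, hj2⟩ = 20*m - 2*i := by
          unfold lbwn
          have e1 : (⟨k, hk⟩ : Fin (2*m)).val = k := rfl
          have e2 : (⟨j, hj2⟩ : Fin (2*m)).val = j := rfl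
          rw [e1, e2]
          split_ifs <;> omega
        show (lbwn m ⟨k, hk⟩ ⟨j, hj2⟩ : ℝ) + 0 = _
        rw [hw]
        push_cast [Nat.zero_add]
        ring
    | succ d ih =>
        intro k hk hki
        have hk1 : k + 1 < 2*m := by omega
        obtain ⟨p, hp⟩ := ih (k+1) hk1 (by omega)
        have hadj : ((lbG m).deleteEdges {s(⟨i, hiu⟩, ⟨i+1, hiu1⟩)}).Adj ⟨k, hk⟩ ⟨k+1, hk1⟩ := by
          rw [deleteEdges_adj]
          refine ⟨Or.inl ⟨rfl, show k + 1 < m by omega⟩, ?_⟩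
          simp only [Set.mem_singleton_iff, Sym2.eq_iff, Fin.mk.injEq]
          omega
        refine ⟨Walk.cons hadj p, ?_⟩
        rw [walkWeight_cons, hp]
        have hw : lbwn m ⟨k, hk⟩ ⟨k+1, hk1⟩ = 1 := by
          unfold lbwn
          have e1 : (⟨k, hk⟩ : Fin (2*m)).val = k := rfl
          have e2 : (⟨k+1, hk1⟩ : Fin (2*m)).val = k+1 := rfl
          rw [e1, e2]
          split_ifs <;> omega
        show (lbwn m ⟨k, hk⟩ ⟨k+1, hk1⟩ : ℝ) + _ = _
        rw [hw]
        have harith : (d + 1) + (20*m - 2*i) = 1 + (d + (20*m - 2*i)) := by omega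
        rw [harith]
        push_cast
        ring
  -- lower bound for G - e
  have hφlow : ∀ q : ((lbG m).deleteEdges {s(⟨i, hiu⟩, ⟨i+1, hiu1⟩)}).Walk ⟨0, h0⟩ ⟨j, hj2⟩,
      ((20*m - i : ℕ) : ℝ) ≤ walkWeight (lbw m) q := by
    intro q
    have hcon : ∀ a b, ((lbG m).deleteEdges {s(⟨i, hiu⟩, ⟨i+1, hiu1⟩)}).Adj a b →
        (fun x => ((lbφ m i x : ℕ) : ℝ)) b - (fun x => ((lbφ m i x : ℕ) : ℝ)) a ≤ lbw m a b := by
      intro a b hab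
      rw [deleteEdges_adj] at hab
      obtain ⟨hadj, hnd⟩ := hab
      simp only [Set.mem_singleton_iff, Sym2.eq_iff] at hnd
      have hne2 : ¬ (a.val = i ∧ b.val = i + 1) ∧ ¬ (b.val = i ∧ a.val = i + 1) := by
        constructor <;> rintro ⟨h1, h2⟩ <;> apply hnd
        · exact Or.inl ⟨Fin.ext h1, Fin.ext h2⟩
        · exact Or.inr ⟨Fin.ext h2, Fin.ext h1⟩
      have hb := lbφ_constraint m hm i hi a b hadj hne2
      simp only
      rw [sub_le_iff_le_add]
      show _ ≤ ((lbwn m a b : ℕ) : ℝ) + _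
      exact_mod_cast hb
    have hq := walkWeight_ge (lbw m) _ hcon q
    rw [lbφ_bj m i j hj1 hj2, lbφ_s0 m i hm h0] at hq
    push_cast at hq ⊢
    linarith
  obtain ⟨p, hp⟩ := walkup i 0 (by omega) (by omega)
  have hsum : i + (20*m - 2*i) = 20*m - i := by omega
  rw [hsum] at hp
  have hG : wdist ((lbG m).deleteEdges {s(⟨i, hiu⟩, ⟨i+1, hiu1⟩)}) (lbw m) ⟨0, h0⟩ ⟨j, hj2⟩
      = ((20*m - i : ℕ) : ℝ) := wdist_eq_of (lbw m) p hp hφlow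
  by_contra hnadj
  -- lower bound for H - e via the shifted potential
  have hψcon : ∀ a b, (H.deleteEdges {s(⟨i, hiu⟩, ⟨i+1, hiu1⟩)}).Adj a b →
      (fun x => ((lbψ m i j x : ℕ) : ℝ)) b - (fun x => ((lbψ m i j x : ℕ) : ℝ)) a ≤ lbw m a b := by
    intro a b hab
    rw [deleteEdges_adj] at hab
    obtain ⟨hadjH, hnd⟩ := hab
    have hadjG : (lbG m).Adj a b := hHG hadjH
    simp only [Set.mem_singleton_iff, Sym2.eq_iff] at hnd
    have hne2 : ¬ (a.val = i ∧ b.val = i + 1) ∧ ¬ (b.val = i ∧ a.val = i + 1) := by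
      constructor <;> rintro ⟨h1, h2⟩ <;> apply hnd
      · exact Or.inl ⟨Fin.ext h1, Fin.ext h2⟩
      · exact Or.inr ⟨Fin.ext h2, Fin.ext h1⟩
    have hnf : ¬ (a.val = i ∧ b.val = j) ∧ ¬ (b.val = i ∧ a.val = j) := by
      constructor <;> rintro ⟨h1, h2⟩ <;> apply hnadj
      · have ha' : a = ⟨i, hiu⟩ := Fin.ext h1
        have hb' : b = ⟨j, hj2⟩ := Fin.ext h2
        exact ha' ▸ hb' ▸ hadjH
      · have hb' : b = ⟨i, hiu⟩ := Fin.ext h1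
        have ha' : a = ⟨j, hj2⟩ := Fin.ext h2
        exact hb' ▸ ha' ▸ hadjH.symm
    have hb := lbψ_constraint m hm i j hi hj1 hj2 a b hadjG hne2 hnf
    simp only
    rw [sub_le_iff_le_add]
    show _ ≤ ((lbwn m a b : ℕ) : ℝ) + _
    exact_mod_cast hb
  have hψlow : ∀ q : (H.deleteEdges {s(⟨i, hiu⟩, ⟨i+1, hiu1⟩)}).Walk ⟨0, h0⟩ ⟨j, hj2⟩,
      ((20*m - i : ℕ) : ℝ) + 1 ≤ walkWeight (lbw m) q := by
    intro q
    have hq := walkWeight_ge (lbw m) _ hψcon q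
    rw [lbψ_bj m i j (by omega) hj1 hj2, lbψ_s0 m i j hm hj1 h0] at hq
    push_cast at hq ⊢
    linarith
  have hHd := pres _ he ⟨j, hj2⟩
  rw [hG] at hHd
  refine wdist_contra (lbw m) ?_ hψlow hHd
  have h20 : (0:ℕ) < 20*m - i := by omega
  exact_mod_cast h20

lemma lbG_conn (m : ℕ) (hm : 2 ≤ m) :
    ∀ e ∈ (lbG m).edgeSet, ((lbG m).deleteEdges {e}).Connected := by
  have h0 : (0:ℕ) < 2*m := by omega
  have hmlt : m < 2*m := by omega
  have hm1lt : m+1 < 2*m := by omega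
  have h1lt : (1:ℕ) < 2*m := by omega
  intro e he
  induction e using Sym2.ind with
  | _ a b =>
  rw [connected_iff]
  refine ⟨?_, ⟨⟨0, h0⟩⟩⟩
  have hadjD : ∀ (u v : Fin (2*m)), lbAdj m u v → (s(u,v) : Sym2 (Fin (2*m))) ≠ s(a,b) →
      ((lbG m).deleteEdges {s(a,b)}).Adj u v := by
    intro u v h1 h2
    rw [deleteEdges_adj]
    exact ⟨h1, by simpa using h2⟩
  suffices hreach : ∀ x : Fin (2*m), ((lbG m).deleteEdges {s(a,b)}).Reachable x ⟨m, hmlt⟩ by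
    intro x y
    exact (hreach x).trans (hreach y).symm
  intro x
  by_cases hxm : x.val < m
  · -- x is a path vertex
    by_cases hxe : (s(x, ⟨m, hmlt⟩) : Sym2 (Fin (2*m))) = s(a,b)
    · -- the deleted edge is exactly (x, b0); detour via b1 and a u' ≠ x
      have key : ∀ hu : (if x.val = 0 then 1 else 0) < 2*m,
          ((lbG m).deleteEdges {s(a,b)}).Reachable x ⟨m, hmlt⟩ := by
        intro hu
        set uv : ℕ := if x.val = 0 then 1 else 0 with huv
        have huvm : uv < m := by rw [huv]; split_ifs <;> omega
        have huvx : uv ≠ x.val := by rw [huv]; split_ifs <;> omega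
        have e1 : ((lbG m).deleteEdges {s(a,b)}).Adj x ⟨m+1, hm1lt⟩ := by
          apply hadjD
          · exact Or.inr (Or.inr (Or.inl ⟨hxm, by simp⟩))
          · rw [← hxe]
            simp only [Ne, Sym2.eq_iff, Fin.ext_iff]
            omega
        have e2 : ((lbG m).deleteEdges {s(a,b)}).Adj ⟨uv, hu⟩ ⟨m+1, hm1lt⟩ := by
          apply hadjD
          · exact Or.inr (Or.inr (Or.inl ⟨by simpa using huvm, by simp⟩))
          · rw [← hxe]
            simp only [Ne, Sym2.eq_iff, Fin.ext_iff]
            omega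
        have e3 : ((lbG m).deleteEdges {s(a,b)}).Adj ⟨uv, hu⟩ ⟨m, hmlt⟩ := by
          apply hadjD
          · exact Or.inr (Or.inr (Or.inl ⟨by simpa using huvm, by simp⟩))
          · rw [← hxe]
            simp only [Ne, Sym2.eq_iff, Fin.ext_iff]
            omega
        exact e1.reachable.trans (e2.reachable.symm.trans e3.reachable)
      exact key (by split_ifs <;> omega)
    · exact (hadjD x ⟨m, hmlt⟩ (Or.inr (Or.inr (Or.inl ⟨hxm, by simp⟩))) hxe).reachable
  · -- x is a b-vertex
    by_cases hxb : x = ⟨m, hmlt⟩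
    · rw [hxb]
    · push_neg at hxm
      have hxbv : x.val ≠ m := fun h => hxb (Fin.ext h)
      by_cases hdel : (s((⟨0, h0⟩ : Fin (2*m)), x) : Sym2 (Fin (2*m))) = s(a,b) ∨
          (s((⟨0, h0⟩ : Fin (2*m)), ⟨m, hmlt⟩) : Sym2 (Fin (2*m))) = s(a,b)
      · -- deleted edge touches u0: use u1
        have e1 : ((lbG m).deleteEdges {s(a,b)}).Adj ⟨1, h1lt⟩ x := by
          apply hadjD
          · exact Or.inr (Or.inr (Or.inl ⟨show (1:ℕ) < m by omega, hxm⟩))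
          · rcases hdel with hd | hd <;>
              (rw [← hd]; simp only [Ne, Sym2.eq_iff, Fin.ext_iff]; omega)
        have e2 : ((lbG m).deleteEdges {s(a,b)}).Adj ⟨1, h1lt⟩ ⟨m, hmlt⟩ := by
          apply hadjD
          · exact Or.inr (Or.inr (Or.inl ⟨show (1:ℕ) < m by omega, by simp⟩))
          · rcases hdel with hd | hd <;>
              (rw [← hd]; simp only [Ne, Sym2.eq_iff, Fin.ext_iff]; omega)
        exact e1.reachable.symm.trans e2.reachable
      · push_neg at hdel
        have e1 : ((lbG m).deleteEdges {s(a,b)}).Adj ⟨0, h0⟩ x := by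
          apply hadjD
          · exact Or.inr (Or.inr (Or.inl ⟨show (0:ℕ) < m by omega, hxm⟩))
          · exact hdel.1
        have e2 : ((lbG m).deleteEdges {s(a,b)}).Adj ⟨0, h0⟩ ⟨m, hmlt⟩ := by
          apply hadjD
          · exact Or.inr (Or.inr (Or.inl ⟨show (0:ℕ) < m by omega, by simp⟩))
          · exact hdel.2
        exact e1.reachable.symm.trans e2.reachable

/-- Exact edge-fault-tolerant single-source distance preservation may require
`Θ(n²)` edges. -/
theorem exact_ESPT_lower_bound :
    ∃ c : ℝ, 0 < c ∧
      ∀ N : ℕ, ∃ n : ℕ, N ≤ n ∧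
        ∃ (G : SimpleGraph (Fin n)) (w : Fin n → Fin n → ℝ) (s : Fin n),
          (∀ a b : Fin n, w a b = w b a) ∧
          (∀ a b : Fin n, G.Adj a b → 0 < w a b) ∧
          (∀ e ∈ G.edgeSet, (G.deleteEdges {e}).Connected) ∧
          ∀ H : SimpleGraph (Fin n), H ≤ G →
            (∀ e ∈ G.edgeSet, ∀ t : Fin n,
              wdist (H.deleteEdges {e}) w s t = wdist (G.deleteEdges {e}) w s t) →
            c * (n : ℝ) ^ 2 ≤ (H.edgeSet.ncard : ℝ) := by
  refine ⟨1/8, by norm_num, ?_⟩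
  intro N
  have hm : 2 ≤ max 2 N := le_max_left _ _
  set m : ℕ := max 2 N with hmdef
  have h0 : 0 < 2*m := by omega
  refine ⟨2*m, by have := le_max_right 2 N; omega, lbG m, lbw m, ⟨0, h0⟩, ?_, ?_, ?_, ?_⟩
  · intro a b
    unfold lbw
    exact_mod_cast lbwn_symm m a b
  · intro a b _
    unfold lbw
    exact_mod_cast lbwn_pos m hm a b
  · exact lbG_conn m hm
  · intro H hHG hpres
    have hforce2 : ∀ (i j : ℕ) (hi' : i < m - 1) (hj' : j < m) (hiu : i < 2*m)
        (hju : m + j < 2*m), H.Adj ⟨i, hiu⟩ ⟨m + j, hju⟩ := by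
      intro i j hi' hj' hiu hju
      exact forced m hm h0 H hHG hpres i (m+j) (by omega) hiu (by omega) (by omega) hju
    classical
    set f : Fin (m-1) × Fin m → Sym2 (Fin (2*m)) :=
      fun p => s((⟨p.1.val, by have := p.1.isLt; omega⟩ : Fin (2*m)),
                 (⟨m + p.2.val, by have := p.2.isLt; omega⟩ : Fin (2*m))) with hfdef
    have hinj : Function.Injective f := by
      rintro ⟨⟨i1, hi1⟩, ⟨j1, hj1⟩⟩ ⟨⟨i2, hi2⟩, ⟨j2, hj2⟩⟩ h
      simp only [hfdef, Sym2.eq_iff, Fin.mk.injEq] at h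
      simp only [Prod.mk.injEq, Fin.mk.injEq]
      omega
    have hsub : Set.range f ⊆ H.edgeSet := by
      rintro x ⟨⟨⟨i, hi'⟩, ⟨j, hj'⟩⟩, rfl⟩
      simp only [hfdef]
      rw [mem_edgeSet]
      exact hforce2 i j hi' hj' (by omega) (by omega)
    have h1 : (Set.range f).ncard = (m-1)*m := by
      rw [← Set.image_univ, Set.ncard_image_of_injective _ hinj, Set.ncard_univ]
      simp [Nat.card_eq_fintype_card]
    have hcount : (m-1)*m ≤ H.edgeSet.ncard := by
      calc (m-1)*m = (Set.range f).ncard := h1.symm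
        _ ≤ H.edgeSet.ncard := Set.ncard_le_ncard hsub (Set.toFinite _)
    have hmR : (2:ℝ) ≤ (m:ℝ) := by exact_mod_cast hm
    have hcR : (((m-1)*m : ℕ) : ℝ) ≤ (H.edgeSet.ncard : ℝ) := by exact_mod_cast hcount
    have hcast : (((m-1)*m : ℕ) : ℝ) = ((m:ℝ) - 1) * (m:ℝ) := by
      push_cast [Nat.cast_sub (show 1 ≤ m by omega)]
      ring
    rw [hcast] at hcR
    push_cast
    nlinarith [hmR, hcR]
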